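/- arXiv:2202.09478 — 5 statements merged into one kernel-verified Lean document; each statement's English description precedes it below -/
import Mathlib

section
/- Let Θ and Ξ be arbitrary types, let S ≥ 1 and k ∈ ℕ, let η : Fin S → Θ → ℝ and T : Fin S → Ξ → ℝ, and set D = Nat.choose (k + S - 1) (S - 1). Then for every M ∈ ℕ there exist n : Θ → Fin D → ℝ and t : (Fin M → Ξ) → Fin D → ℝ such that for all θ ∈ Θ and ξ : Fin M → Ξ, ∑_{i : Fin M} (∑_{s : Fin S} η s θ · T s (ξ i))^k = ∑_{j : Fin D} n θ j · t ξ j. That is, the Monte Carlo sum of g(w) = w^k for weights W(θ,ξ) = ∑_s η_s(θ) T_s(ξ) admits a factorization whose size D = C(k+S−1, S−1) is independent of the number of Monte Carlo iterations M. (Theorem 2.) -/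
/-- Theorem 2: for weights `W(θ,ξ) = ∑ s, η s θ * T s ξ` and `g(w) = w^k`, the
Monte Carlo sum admits, for every `M`, a factorization of size
`D = C(k + S - 1, S - 1)`, independent of the number of MC iterations `M`. -/
theorem mc_repar_linear_family_pow {Θ Ξ : Type*} (S k : ℕ) (hS : 1 ≤ S)
    (η : Fin S → Θ → ℝ) (T : Fin S → Ξ → ℝ) :
    ∀ M : ℕ, ∃ (n : Θ → Fin ((k + S - 1).choose (S - 1)) → ℝ)
      (t : (Fin M → Ξ) → Fin ((k + S - 1).choose (S - 1)) → ℝ),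
      ∀ (θ : Θ) (ξ : Fin M → Ξ),
        ∑ i : Fin M, (∑ s : Fin S, η s θ * T s (ξ i)) ^ k =
          ∑ j, n θ j * t ξ j := by
  intro M
  classical
  set A := Finset.piAntidiag (Finset.univ : Finset (Fin S)) k with hA
  have hsym : (Finset.univ : Finset (Fin S)).sym k = Finset.univ := by
    ext m; simp [Finset.mem_sym_iff]
  have hcard : A.card = (k + S - 1).choose (S - 1) := by
    rw [hA, ← Finset.map_sym_eq_piAntidiag, Finset.card_map, hsym, Finset.card_univ,
      Sym.card_sym_eq_choose, Fintype.card_fin]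
    rw [add_comm S k]
    rw [← Nat.choose_symm (by omega : S - 1 ≤ k + S - 1)]
    congr 1
    omega
  let e : Fin ((k + S - 1).choose (S - 1)) ≃ A := (Fintype.equivFinOfCardEq (by
    rw [Fintype.card_coe, hcard])).symm
  refine ⟨fun θ j => (Nat.multinomial Finset.univ ((e j : Fin S → ℕ)) : ℝ) * ∏ s, η s θ ^ (e j : Fin S → ℕ) s,
    fun ξ j => ∑ i : Fin M, ∏ s, T s (ξ i) ^ (e j : Fin S → ℕ) s, fun θ ξ => ?_⟩
  have expand : ∀ i : Fin M, (∑ s : Fin S, η s θ * T s (ξ i)) ^ k =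
      ∑ d ∈ A, (Nat.multinomial Finset.univ d : ℝ) *
        ((∏ s, η s θ ^ d s) * ∏ s, T s (ξ i) ^ d s) := by
    intro i
    rw [Finset.sum_pow_eq_sum_piAntidiag]
    refine Finset.sum_congr rfl fun d _ => ?_
    rw [← Finset.prod_mul_distrib]
    simp [mul_pow]
  simp_rw [expand]
  rw [Finset.sum_comm]
  rw [← Finset.sum_coe_sort A]
  refine (Fintype.sum_equiv e _ _ fun j => ?_).symm
  rw [Finset.mul_sum]
  refine Finset.sum_congr rfl fun i _ => ?_
  ring
end

section
/- Let Θ and Ξ be arbitrary types, let S ≥ 2 and k ∈ ℕ, let η : Fin S → Θ → ℝ and T : Fin S → Ξ → ℝ, and let f, g : ℝ → ℝ satisfy g (f w) = w^k for all w ∈ ℝ. Set D = Nat.choose (k + S - 1) (S - 1). Then for every M ∈ ℕ there exist n : Θ → Fin D → ℝ and t : (Fin M → Ξ) → Fin D → ℝ such that for all θ and ξ, ∑_{i : Fin M} g (f (∑_{s : Fin S} η s θ · T s (ξ i))) = ∑_{j : Fin D} n θ j · t ξ j. That is, Theorem 2 extends to transformed weights W' = f(W): the Monte Carlo sum admits a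 factorization of size C(k+S−1, S−1) independent of M. (Corollary 2.) -/
/-- Corollary 2: Theorem 2 extends to transformed weights `W' = f(W)` with
`W(θ,ξ) = ∑ s, η s θ * T s ξ`, `S ≥ 2`.  If `g (f w) = w^k` for all `w`, the
Monte Carlo sum admits a factorization of size `C(k + S - 1, S - 1)`
independent of `M`. -/
theorem mc_repar_transformed_linear_family {Θ Ξ : Type*} (S k : ℕ) (hS : 2 ≤ S)
    (η : Fin S → Θ → ℝ) (T : Fin S → Ξ → ℝ) (f g : ℝ → ℝ)
    (hgf : ∀ w : ℝ, g (f w) = w ^ k) :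
    ∀ M : ℕ, ∃ (n : Θ → Fin ((k + S - 1).choose (S - 1)) → ℝ)
      (t : (Fin M → Ξ) → Fin ((k + S - 1).choose (S - 1)) → ℝ),
      ∀ (θ : Θ) (ξ : Fin M → Ξ),
        ∑ i : Fin M, g (f (∑ s : Fin S, η s θ * T s (ξ i))) =
          ∑ j, n θ j * t ξ j := by
  intro M
  classical
  have hcard : Fintype.card (Sym (Fin S) k) = (k + S - 1).choose (S - 1) := by
    rw [Sym.card_sym_eq_multichoose, Fintype.card_fin, Nat.multichoose_eq]
    have h1 : S + k - 1 = k + S - 1 := by omega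
    have hk : k ≤ k + S - 1 := by omega
    have h2 : k + S - 1 - k = S - 1 := by omega
    rw [h1, ← h2, Nat.choose_symm hk]
  let e : Sym (Fin S) k ≃ Fin ((k + S - 1).choose (S - 1)) :=
    Fintype.equivFinOfCardEq hcard
  let σ : (Fin k → Fin S) → Sym (Fin S) k :=
    fun p => ⟨Multiset.map p Finset.univ.val, by simp⟩
  have hσ : ∀ (a : Fin S → ℝ) (p : Fin k → Fin S),
      ((σ p).1.map a).prod = ∏ j, a (p j) := by
    intro a p
    simp [σ, Multiset.map_map, Finset.prod, Function.comp_def]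
  refine ⟨fun θ j =>
      ((Finset.univ.filter (fun p : Fin k → Fin S => σ p = e.symm j)).card : ℝ) *
        ((e.symm j).1.map (fun s => η s θ)).prod,
    fun ξ j => ∑ i, ((e.symm j).1.map (fun s => T s (ξ i))).prod, ?_⟩
  intro θ ξ
  have key : ∀ i : Fin M,
      g (f (∑ s : Fin S, η s θ * T s (ξ i))) =
        ∑ p : Fin k → Fin S, (∏ j, η (p j) θ) * ∏ j, T (p j) (ξ i) := by
    intro i
    rw [hgf, Fintype.sum_pow]
    refine Finset.sum_congr rfl fun p _ => ?_
    rw [← Finset.prod_mul_distrib]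
  calc ∑ i : Fin M, g (f (∑ s : Fin S, η s θ * T s (ξ i)))
      = ∑ p : Fin k → Fin S, (∏ j, η (p j) θ) * ∑ i, ∏ j, T (p j) (ξ i) := by
        simp_rw [key]
        rw [Finset.sum_comm]
        simp_rw [Finset.mul_sum]
    _ = ∑ m : Sym (Fin S) k, ∑ p ∈ Finset.univ.filter (fun p => σ p = m),
          (∏ j, η (p j) θ) * ∑ i, ∏ j, T (p j) (ξ i) := by
        rw [Finset.sum_fiberwise]
    _ = ∑ m : Sym (Fin S) k,
          ((Finset.univ.filter (fun p : Fin k → Fin S => σ p = m)).card : ℝ) *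
            ((m.1.map (fun s => η s θ)).prod * ∑ i, (m.1.map (fun s => T s (ξ i))).prod) := by
        refine Finset.sum_congr rfl fun m _ => ?_
        rw [Finset.sum_congr rfl (fun p hp => ?_), Finset.sum_const, nsmul_eq_mul]
        rw [Finset.mem_filter] at hp
        rw [← hp.2, hσ]
        congr 1
        refine Finset.sum_congr rfl fun i _ => ?_
        rw [hσ]
    _ = ∑ j, (((Finset.univ.filter (fun p : Fin k → Fin S => σ p = e.symm j)).card : ℝ) *
          ((e.symm j).1.map (fun s => η s θ)).prod) *
          ∑ i, ((e.symm j).1.map (fun s => T s (ξ i))).prod := by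
        rw [← Equiv.sum_comp e.symm]
        refine Finset.sum_congr rfl fun j _ => ?_
        ring
end

section
/- Let Θ and Ξ be arbitrary types, let S ≥ 1 and K ∈ ℕ, let η : Fin S → Θ → ℝ, T : Fin S → Ξ → ℝ, and let c : Fin (K+1) → ℝ be polynomial coefficients not depending on θ. Set D = Nat.choose (K + S) S - 1. Then for every M ∈ ℕ there exist n : Θ → Fin D → ℝ, t : (Fin M → Ξ) → Fin D → ℝ, and a constant r ∈ ℝ (independent of θ and ξ) such that for all θ and ξ, ∑_{i : Fin M} ∑_{k = 0}^{K} c k · (∑_{s : Fin S} η s θ · T s (ξ i))^k = ∑_{j : Fin D} n θ j · t ξ j + r. That is, the Monte Carlo sum of an arbitrary degree-K polynomial g(w) = p_K(w) of the weights admits a factorization of size C(K+S, S) − 1 independent of M, after discarding the θ-independent constant term. (Corollary 3.) -/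
open Finset

/-- Extend a sum over a finite type to a sum over `Fin D`, padding with `0`. -/
lemma sum_option_extend {β : Type*} [Fintype β] {D : ℕ} (h : Fintype.card β ≤ D) :
    ∃ f : Fin D → Option β, ∀ F : β → ℝ,
      (∑ j : Fin D, ((f j).elim 0 F)) = ∑ x : β, F x := by
  classical
  set N := Fintype.card β with hN
  let e : β ≃ Fin N := Fintype.equivFin β
  let g : ℕ → Option β := fun j => if h' : j < N then some (e.symm ⟨j, h'⟩) else none
  refine ⟨fun j => g j, fun F => ?_⟩
  have : (∑ j : Fin D, ((g (j : ℕ)).elim 0 F)) = ∑ j ∈ Finset.range D, ((g j).elim 0 F) :=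
    Fin.sum_univ_eq_sum_range (fun j => ((g j).elim 0 F)) D
  rw [this]
  have hsplit : ∑ j ∈ Finset.Ico 0 N, ((g j).elim 0 F) + ∑ j ∈ Finset.Ico N D, ((g j).elim 0 F)
      = ∑ j ∈ Finset.Ico 0 D, ((g j).elim 0 F) :=
    Finset.sum_Ico_consecutive _ (Nat.zero_le N) h
  have h2 : ∑ j ∈ Finset.Ico N D, ((g j).elim 0 F) = 0 := by
    refine Finset.sum_eq_zero fun j hj => ?_
    have : ¬ j < N := by have := (Finset.mem_Ico.mp hj).1; omega
    simp [g, this]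
  have h1 : ∑ j ∈ Finset.Ico 0 N, ((g j).elim 0 F) = ∑ x : β, F x := by
    rw [← Finset.range_eq_Ico, ← Fin.sum_univ_eq_sum_range (fun j => ((g j).elim 0 F)) N]
    have : ∀ j : Fin N, ((g (j : ℕ)).elim 0 F) = F (e.symm j) := by
      intro j
      simp [g, j.isLt]
    rw [Finset.sum_congr rfl fun j _ => this j]
    exact Equiv.sum_comp e.symm F
  rw [Finset.range_eq_Ico, ← hsplit, h1, h2, add_zero]

lemma card_sigma_sym_le (S K : ℕ) :
    Fintype.card (Σ k : Fin K, Sym (Fin S) ((k : ℕ) + 1)) ≤ (K + S).choose S - 1 := by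
  classical
  rcases Nat.eq_zero_or_pos K with rfl | hK
  · haveI : IsEmpty (Σ k : Fin 0, Sym (Fin S) ((k : ℕ) + 1)) := ⟨fun x => x.1.elim0⟩
    simp
  -- the injection by padding with `Fin.last S`
  let ψ : (Σ k : Fin K, Sym (Fin S) ((k : ℕ) + 1)) → Sym (Fin (S + 1)) K := fun x =>
    ⟨Multiset.map Fin.castSucc (x.2 : Multiset (Fin S))
        + Multiset.replicate (K - ((x.1 : ℕ) + 1)) (Fin.last S), by
      have hc : Multiset.card (x.2 : Multiset (Fin S)) = (x.1 : ℕ) + 1 := x.2.2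
      have hlt : (x.1 : ℕ) < K := x.1.isLt
      simp [hc]⟩
  have hcount : ∀ x, Multiset.count (Fin.last S) (ψ x : Multiset (Fin (S + 1)))
      = K - ((x.1 : ℕ) + 1) := by
    intro x
    have h0 : Multiset.count (Fin.last S)
        (Multiset.map Fin.castSucc (x.2 : Multiset (Fin S))) = 0 := by
      rw [Multiset.count_eq_zero]
      intro hmem
      obtain ⟨a, _, ha⟩ := Multiset.mem_map.mp hmem
      exact absurd ha (Fin.castSucc_lt_last a).ne
    simp [ψ, Multiset.count_add, h0]
  have hinj : Function.Injective ψ := by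
    rintro ⟨k1, m1⟩ ⟨k2, m2⟩ hxy
    have hcnt := (hcount ⟨k1, m1⟩).symm.trans ((congrArg _ (congrArg Sym.toMultiset hxy)).trans
      (hcount ⟨k2, m2⟩))
    have hcnt' : K - ((k1 : ℕ) + 1) = K - ((k2 : ℕ) + 1) := hcnt
    have hk : (k1 : ℕ) = (k2 : ℕ) := by
      have h1 : (k1 : ℕ) < K := k1.isLt
      have h2 : (k2 : ℕ) < K := k2.isLt
      omega
    have hkk : k1 = k2 := Fin.ext hk
    subst hkk
    have hmul : (m1 : Multiset (Fin S)) = (m2 : Multiset (Fin S)) := by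
      have h' := congrArg Sym.toMultiset hxy
      simp only [ψ] at h'
      have h'' : Multiset.map Fin.castSucc (m1 : Multiset (Fin S))
          = Multiset.map Fin.castSucc (m2 : Multiset (Fin S)) := by
        exact add_right_cancel h'
      exact Multiset.map_injective (Fin.castSucc_injective S) h''
    exact Sigma.ext rfl (heq_of_eq (Sym.coe_injective hmul))
  -- ψ avoids the constant multiset `replicate K (last S)`
  let x₀ : Sym (Fin (S + 1)) K := ⟨Multiset.replicate K (Fin.last S), Multiset.card_replicate _ _⟩
  have havoid : ∀ x, ψ x ≠ x₀ := by
    intro x hx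
    have h1 := hcount x
    rw [hx] at h1
    have h2 : Multiset.count (Fin.last S) (x₀ : Multiset (Fin (S + 1))) = K := by
      simp [x₀]
    rw [h2] at h1
    have : (x.1 : ℕ) < K := x.1.isLt
    omega
  have hcard : Fintype.card (Σ k : Fin K, Sym (Fin S) ((k : ℕ) + 1))
      ≤ (Finset.univ.erase x₀).card := by
    rw [← Finset.card_univ]
    refine Finset.card_le_card_of_injOn ψ (fun x _ => Finset.mem_erase.mpr
      ⟨havoid x, Finset.mem_univ _⟩) (fun a _ b _ h => hinj h)
  have hcard2 : (Finset.univ.erase x₀).card = Fintype.card (Sym (Fin (S + 1)) K) - 1 := by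
    rw [Finset.card_erase_of_mem (Finset.mem_univ _), Finset.card_univ]
  have hsym : Fintype.card (Sym (Fin (S + 1)) K) = (K + S).choose S := by
    rw [Sym.card_sym_eq_choose, Fintype.card_fin]
    have h1 : S + 1 + K - 1 = K + S := by omega
    rw [h1, Nat.choose_symm_add]
  omega

/-- Corollary 3: the Monte Carlo sum of an arbitrary degree-`K` polynomial
`p_K(w) = ∑_{k=0}^K c_k w^k` of the weights `W(θ,ξ) = ∑ s, η s θ * T s ξ`
admits, for every `M`, a factorization of size `D = C(K + S, S) - 1`,
independent of `M`, up to a constant (θ- and ξ-independent) remainder. -/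
theorem mc_repar_polynomial {Θ Ξ : Type*} (S K : ℕ) (hS : 1 ≤ S)
    (η : Fin S → Θ → ℝ) (T : Fin S → Ξ → ℝ) (c : Fin (K + 1) → ℝ) :
    ∀ M : ℕ, ∃ (n : Θ → Fin ((K + S).choose S - 1) → ℝ)
      (t : (Fin M → Ξ) → Fin ((K + S).choose S - 1) → ℝ) (r : ℝ),
      ∀ (θ : Θ) (ξ : Fin M → Ξ),
        ∑ i : Fin M, ∑ k : Fin (K + 1),
            c k * (∑ s : Fin S, η s θ * T s (ξ i)) ^ (k : ℕ) =
          (∑ j, n θ j * t ξ j) + r := by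
  classical
  intro M
  set β := (Σ k : Fin K, Sym (Fin S) ((k : ℕ) + 1)) with hβ
  obtain ⟨f, hf⟩ := sum_option_extend (card_sigma_sym_le S K)
  let nf : Θ → β → ℝ := fun θ x => (x.2.1.map (fun s => η s θ)).prod
  let tf : (Fin M → Ξ) → β → ℝ := fun ξ x =>
    c x.1.succ * ((x.2.1.countPerms : ℕ) : ℝ) *
      ∑ i : Fin M, (x.2.1.map (fun s => T s (ξ i))).prod
  refine ⟨fun θ j => (f j).elim 0 (nf θ), fun ξ j => (f j).elim 0 (tf ξ), M * c 0, ?_⟩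
  intro θ ξ
  have hmul : ∀ j, ((f j).elim 0 (nf θ)) * ((f j).elim 0 (tf ξ))
      = (f j).elim 0 (fun x => nf θ x * tf ξ x) := by
    intro j; cases f j <;> simp
  rw [Finset.sum_congr rfl fun j _ => hmul j, hf (fun x => nf θ x * tf ξ x)]
  have key : ∀ i : Fin M, ∑ k : Fin (K + 1),
      c k * (∑ s : Fin S, η s θ * T s (ξ i)) ^ (k : ℕ)
      = c 0 + ∑ k : Fin K, ∑ m : Sym (Fin S) ((k : ℕ) + 1),
          c k.succ * ((m.1.countPerms : ℕ) : ℝ) *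
            ((m.1.map (fun s => η s θ)).prod *
              (m.1.map (fun s => T s (ξ i))).prod) := by
    intro i
    rw [Fin.sum_univ_succ]
    simp only [Fin.val_zero, pow_zero, mul_one, Fin.val_succ]
    congr 1
    refine Finset.sum_congr rfl fun k _ => ?_
    have hp := Finset.sum_pow (s := (Finset.univ : Finset (Fin S)))
      (fun s => η s θ * T s (ξ i)) ((k : ℕ) + 1)
    rw [Finset.sym_univ] at hp
    rw [hp, Finset.mul_sum]
    refine Finset.sum_congr rfl fun m _ => ?_
    rw [Multiset.prod_map_mul]
    ring
  calc ∑ i : Fin M, ∑ k : Fin (K + 1),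
        c k * (∑ s : Fin S, η s θ * T s (ξ i)) ^ (k : ℕ)
      = ∑ i : Fin M, (c 0 + ∑ k : Fin K, ∑ m : Sym (Fin S) ((k : ℕ) + 1),
          c k.succ * ((m.1.countPerms : ℕ) : ℝ) *
            ((m.1.map (fun s => η s θ)).prod *
              (m.1.map (fun s => T s (ξ i))).prod)) :=
        Finset.sum_congr rfl fun i _ => key i
    _ = (∑ x : β, nf θ x * tf ξ x) + M * c 0 := by
        rw [Finset.sum_add_distrib, Finset.sum_const, Finset.card_univ, Fintype.card_fin,
          nsmul_eq_mul]
        rw [add_comm]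
        congr 1
        rw [Finset.sum_comm]
        rw [← Finset.univ_sigma_univ, Finset.sum_sigma]
        refine Finset.sum_congr rfl fun k _ => ?_
        rw [Finset.sum_comm]
        refine Finset.sum_congr rfl fun m _ => ?_
        simp only [nf, tf]
        rw [Finset.mul_sum, Finset.mul_sum]
        refine Finset.sum_congr rfl fun i _ => ?_
        ring
end

section
/- Let Θ and Ξ be arbitrary types, let S ≥ 2 and K ∈ ℕ, let η : Fin S → Θ → ℝ, T : Fin S → Ξ → ℝ, let a ∈ ℝ, and let c : Fin (K+1) → ℝ (the Taylor coefficients g^{(k)}(a)/k!, not depending on θ). Set D = Nat.choose (K + S + 1) (S + 1) - (K + 1). Then for every M ∈ ℕ there exist n : Θ → Fin D → ℝ, t : (Fin M → Ξ) → Fin D → ℝ, and a constant r ∈ ℝ (independent of θ and ξ) such that for all θ and ξ, ∑_{i : Fin M} ∑_{k = 0}^{K} c k · (∑_{s : Fin S} η s θ · T s (ξ i) - a)^k = ∑_{j : Fin D} n θ j · t ξ j + r. That is, the Monte Carlo sum of the K-term Taylor approximation of g admits a factorization of size C(K+S+1, S+1) − (K+1), independent of M. (Theorem 4, first route: the shift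 −a treated as an extra indeterminate.) -/
open Finset

/-- Padding lemma: a bilinear factorization over a finite index type of
cardinality at most `D` yields one over `Fin D`. -/
private lemma pad_fact {Θ X : Type*} {ι : Type*} [Fintype ι] (D : ℕ)
    (h : Fintype.card ι ≤ D) (N : Θ → ι → ℝ) (Tt : X → ι → ℝ) :
    ∃ (n : Θ → Fin D → ℝ) (t : X → Fin D → ℝ),
      ∀ θ x, ∑ i, N θ i * Tt x i = ∑ j, n θ j * t x j := by
  have hcard : Fintype.card (ι ⊕ Fin (D - Fintype.card ι)) = D := by
    simp [Nat.add_sub_cancel' h]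
  obtain ⟨e⟩ : Nonempty (ι ⊕ Fin (D - Fintype.card ι) ≃ Fin D) :=
    ⟨Fintype.equivFinOfCardEq hcard⟩
  refine ⟨fun θ j => Sum.elim (N θ) 0 (e.symm j),
    fun x j => Sum.elim (Tt x) 0 (e.symm j), fun θ x => ?_⟩
  rw [← Equiv.sum_comp e (fun j => Sum.elim (N θ) 0 (e.symm j) *
    Sum.elim (Tt x) 0 (e.symm j))]
  simp [Fintype.sum_sum_type]

private lemma key_ineq (S j : ℕ) (hS : 1 ≤ S) :
    (S + j).choose (j + 1) + 1 ≤ (S + (j + 1)).choose S := by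
  obtain ⟨S', rfl⟩ : ∃ S', S = S' + 1 := ⟨S - 1, by omega⟩
  have h2 : (S' + 1 + (j + 1)).choose (S' + 1)
      = (S' + 1 + j).choose S' + (S' + 1 + j).choose (S' + 1) := by
    rw [show S' + 1 + (j + 1) = (S' + 1 + j) + 1 from by ring, Nat.choose_succ_succ]
  have h3 := Nat.choose_symm (show j + 1 ≤ S' + 1 + j by omega)
  rw [show S' + 1 + j - (j + 1) = S' from by omega] at h3
  have h4 : 0 < (S' + 1 + j).choose (S' + 1) := Nat.choose_pos (by omega)
  rw [h2, h3]
  exact Nat.add_le_add_left h4 _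

/-- Theorem 4, first route: the Monte Carlo sum of the degree-`K` Taylor
approximation `∑_{k=0}^K c_k (w - a)^k` of `g`, for weights
`W(θ,ξ) = ∑ s, η s θ * T s ξ` with `S ≥ 2`, admits for every `M` a
factorization of size `D = C(K + S + 1, S + 1) - (K + 1)`, independent of `M`,
up to a constant (θ- and ξ-independent) remainder. -/
theorem mc_repar_taylor_extra_indeterminate {Θ Ξ : Type*} (S K : ℕ) (hS : 2 ≤ S)
    (η : Fin S → Θ → ℝ) (T : Fin S → Ξ → ℝ) (a : ℝ) (c : Fin (K + 1) → ℝ) :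
    ∀ M : ℕ, ∃ (n : Θ → Fin ((K + S + 1).choose (S + 1) - (K + 1)) → ℝ)
      (t : (Fin M → Ξ) → Fin ((K + S + 1).choose (S + 1) - (K + 1)) → ℝ) (r : ℝ),
      ∀ (θ : Θ) (ξ : Fin M → Ξ),
        ∑ i : Fin M, ∑ k : Fin (K + 1),
            c k * (∑ s : Fin S, η s θ * T s (ξ i) - a) ^ (k : ℕ) =
          (∑ j, n θ j * t ξ j) + r := by
  intro M
  classical
  set D := (K + S + 1).choose (S + 1) - (K + 1) with hD
  -- collected coefficients of `w^j` after binomial expansion of `(w-a)^k`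
  set b : ℕ → ℝ := fun j => ∑ k : Fin (K + 1),
      if j ≤ (k : ℕ) then c k * ((-a) ^ ((k : ℕ) - j) * ((k : ℕ).choose j : ℝ)) else 0
    with hb
  have step1 : ∀ w : ℝ, (∑ k : Fin (K + 1), c k * (w - a) ^ (k : ℕ))
      = ∑ j ∈ Finset.range (K + 1), b j * w ^ j := by
    intro w
    have h1 : ∀ k : Fin (K + 1), c k * (w - a) ^ (k : ℕ)
        = ∑ j ∈ Finset.range (K + 1),
            (if j ≤ (k : ℕ) then c k * ((-a) ^ ((k : ℕ) - j) * ((k : ℕ).choose j : ℝ))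
              else 0) * w ^ j := by
      intro k
      have hk : (k : ℕ) < K + 1 := k.isLt
      have hfilter : (Finset.range (K + 1)).filter (· ≤ (k : ℕ))
          = Finset.range ((k : ℕ) + 1) := by
        ext j
        simp only [Finset.mem_filter, Finset.mem_range, Nat.lt_succ_iff]
        exact ⟨fun h => h.2, fun h => ⟨h.trans (Nat.lt_succ_iff.mp hk), h⟩⟩
      calc c k * (w - a) ^ (k : ℕ)
          = ∑ j ∈ Finset.range ((k : ℕ) + 1),
              (c k * ((-a) ^ ((k : ℕ) - j) * ((k : ℕ).choose j : ℝ))) * w ^ j := by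
            rw [sub_eq_add_neg, add_pow, Finset.mul_sum]
            exact Finset.sum_congr rfl fun j _ => by ring
        _ = ∑ j ∈ Finset.range (K + 1),
              (if j ≤ (k : ℕ) then c k * ((-a) ^ ((k : ℕ) - j) * ((k : ℕ).choose j : ℝ))
                else 0) * w ^ j := by
            rw [← hfilter, Finset.sum_filter]
            exact Finset.sum_congr rfl fun j _ => by split <;> simp
    calc (∑ k : Fin (K + 1), c k * (w - a) ^ (k : ℕ))
        = ∑ k : Fin (K + 1), ∑ j ∈ Finset.range (K + 1),
            (if j ≤ (k : ℕ) then c k * ((-a) ^ ((k : ℕ) - j) * ((k : ℕ).choose j : ℝ))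
              else 0) * w ^ j := Finset.sum_congr rfl fun k _ => h1 k
      _ = ∑ j ∈ Finset.range (K + 1), ∑ k : Fin (K + 1),
            (if j ≤ (k : ℕ) then c k * ((-a) ^ ((k : ℕ) - j) * ((k : ℕ).choose j : ℝ))
              else 0) * w ^ j := Finset.sum_comm
      _ = ∑ j ∈ Finset.range (K + 1), b j * w ^ j := by
            refine Finset.sum_congr rfl fun j _ => ?_
            rw [hb, ← Finset.sum_mul]
  -- the index type
  have hcard : Fintype.card (Σ j : Fin K, Sym (Fin S) ((j : ℕ) + 1)) ≤ D := by
    have h1 : Fintype.card (Σ j : Fin K, Sym (Fin S) ((j : ℕ) + 1))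
        = ∑ j ∈ Finset.range K, (S + j).choose (j + 1) := by
      rw [Fintype.card_sigma, ← Fin.sum_univ_eq_sum_range
        (fun j => (S + j).choose (j + 1)) K]
      refine Finset.sum_congr rfl fun j _ => ?_
      rw [Sym.card_sym_eq_choose, Fintype.card_fin,
        show S + ((j : ℕ) + 1) - 1 = S + (j : ℕ) from by omega]
    have pascal_sum : ∀ K' : ℕ, (K' + S + 1).choose (S + 1)
        = ∑ k ∈ Finset.range (K' + 1), (S + k).choose S := by
      intro K'
      induction K' with
      | zero => simp
      | succ m ih =>
        rw [Finset.sum_range_succ, ← ih,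
          show m + 1 + S + 1 = (m + S + 1) + 1 from by ring,
          show (S + 1) = S + 1 from rfl, Nat.choose_succ_succ,
          show S + (m + 1) = m + S + 1 from by ring]
        ring
    have key : ∀ j : ℕ, (S + j).choose (j + 1) + 1 ≤ (S + (j + 1)).choose S :=
      fun j => key_ineq S j (by omega)
    have hsum : (∑ j ∈ Finset.range K, (S + j).choose (j + 1)) + K
        ≤ ∑ j ∈ Finset.range K, (S + (j + 1)).choose S := by
      have := Finset.sum_le_sum (fun j (_ : j ∈ Finset.range K) => key j)
      rwa [Finset.sum_add_distrib, Finset.sum_const, Finset.card_range,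
        smul_eq_mul, mul_one] at this
    have hps := pascal_sum K
    rw [Finset.sum_range_succ'] at hps
    have h5 : (S + 0).choose S = 1 := by simp
    omega
  obtain ⟨n, t, hnt⟩ := pad_fact D hcard
      (fun θ (p : Σ j : Fin K, Sym (Fin S) ((j : ℕ) + 1)) =>
        b ((p.1 : ℕ) + 1) * (p.2.val.countPerms : ℝ)
          * (p.2.val.map fun s => η s θ).prod)
      (fun (ξ : Fin M → Ξ) (p : Σ j : Fin K, Sym (Fin S) ((j : ℕ) + 1)) =>
        ∑ i : Fin M, (p.2.val.map fun s => T s (ξ i)).prod)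
  refine ⟨n, t, (M : ℝ) * b 0, fun θ ξ => ?_⟩
  rw [← hnt θ ξ]
  calc ∑ i : Fin M, ∑ k : Fin (K + 1),
        c k * (∑ s : Fin S, η s θ * T s (ξ i) - a) ^ (k : ℕ)
      = ∑ i : Fin M, ∑ j ∈ Finset.range (K + 1),
          b j * (∑ s : Fin S, η s θ * T s (ξ i)) ^ j :=
        Finset.sum_congr rfl fun i _ => step1 _
    _ = ∑ j ∈ Finset.range (K + 1), ∑ i : Fin M,
          b j * (∑ s : Fin S, η s θ * T s (ξ i)) ^ j := Finset.sum_comm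
    _ = (∑ j ∈ Finset.range K, ∑ i : Fin M,
          b (j + 1) * (∑ s : Fin S, η s θ * T s (ξ i)) ^ (j + 1))
        + ∑ i : Fin M, b 0 * (∑ s : Fin S, η s θ * T s (ξ i)) ^ 0 :=
        Finset.sum_range_succ' _ _
    _ = (∑ j ∈ Finset.range K, ∑ m ∈ (Finset.univ : Finset (Fin S)).sym (j + 1),
          (b (j + 1) * (m.val.countPerms : ℝ) * (m.val.map fun s => η s θ).prod)
            * ∑ i : Fin M, (m.val.map fun s => T s (ξ i)).prod)
        + (M : ℝ) * b 0 := by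
        congr 1
        · refine Finset.sum_congr rfl fun j _ => ?_
          calc ∑ i : Fin M, b (j + 1) * (∑ s : Fin S, η s θ * T s (ξ i)) ^ (j + 1)
              = ∑ i : Fin M, ∑ m ∈ (Finset.univ : Finset (Fin S)).sym (j + 1),
                  b (j + 1) * ((m.val.countPerms : ℝ)
                    * ((m.val.map fun s => η s θ).prod
                        * (m.val.map fun s => T s (ξ i)).prod)) := by
                refine Finset.sum_congr rfl fun i _ => ?_
                rw [Finset.sum_pow, Finset.mul_sum]
                simp only [Multiset.prod_map_mul]
            _ = ∑ m ∈ (Finset.univ : Finset (Fin S)).sym (j + 1),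
                  (b (j + 1) * (m.val.countPerms : ℝ)
                    * (m.val.map fun s => η s θ).prod)
                    * ∑ i : Fin M, (m.val.map fun s => T s (ξ i)).prod := by
                rw [Finset.sum_comm]
                refine Finset.sum_congr rfl fun m _ => ?_
                rw [Finset.mul_sum]
                exact Finset.sum_congr rfl fun i _ => by ring
        · simp [mul_comm]
    _ = (∑ p : Σ j : Fin K, Sym (Fin S) ((j : ℕ) + 1),
          (b ((p.1 : ℕ) + 1) * (p.2.val.countPerms : ℝ)
            * (p.2.val.map fun s => η s θ).prod)
          * ∑ i : Fin M, (p.2.val.map fun s => T s (ξ i)).prod)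
        + (M : ℝ) * b 0 := by
        congr 1
        rw [← Finset.univ_sigma_univ, Finset.sum_sigma]
        rw [← Fin.sum_univ_eq_sum_range (fun j =>
          ∑ m ∈ (Finset.univ : Finset (Fin S)).sym (j + 1),
            (b (j + 1) * (m.val.countPerms : ℝ) * (m.val.map fun s => η s θ).prod)
              * ∑ i : Fin M, (m.val.map fun s => T s (ξ i)).prod) K]
        exact Finset.sum_congr rfl fun j _ => by rw [Finset.sym_univ]
end

section
/- Let Θ and Ξ be arbitrary types, let S ≥ 2 and K ∈ ℕ, let η : Fin S → Θ → ℝ, T : Fin S → Ξ → ℝ, let a ∈ ℝ, and let c : Fin (K+1) → ℝ. Suppose in addition that there exist j : Fin S and c₀ ∈ ℝ with c₀ ≠ 0 such that T j ξ = c₀ for all ξ ∈ Ξ. Set D = Nat.choose (K + S) S - 1. Then for every M ∈ ℕ there exist n : Θ → Fin D → ℝ, t : (Fin M → Ξ) → Fin D → ℝ, and a constant r ∈ ℝ (independent of θ and ξ) such that for all θ and ξ, ∑_{i : Fin M} ∑_{k = 0}^{K} c k · (∑_{s : Fin S} η s θ · T s (ξ i) - a)^k = ∑_{j : Fin D} n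 θ j · t ξ j + r. That is, when one sufficient statistic is a nonzero constant, the shift −a can be absorbed (Lemma 1) and the Taylor-approximated Monte Carlo sum factorizes as a degree-K polynomial in the original S indeterminates, with size independent of M. (Theorem 4, second route.) -/
open Finset

/-- Padding lemma: a bilinear factorization over a finite index set of size `≤ D`
can be re-indexed over `Fin D` (padding with zeros). -/
lemma pad_factorization {I X Y : Type*} (P : Finset I) (A : I → X → ℝ) (B : I → Y → ℝ)
    {D : ℕ} (h : P.card ≤ D) :
    ∃ (n : X → Fin D → ℝ) (t : Y → Fin D → ℝ), ∀ x y,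
      ∑ p ∈ P, A p x * B p y = ∑ d : Fin D, n x d * t y d := by
  classical
  let e : Fin P.card ≃ ↥P := P.equivFin.symm
  refine ⟨fun x d => if h' : (d : ℕ) < P.card then A (e ⟨d, h'⟩) x else 0,
          fun y d => if h' : (d : ℕ) < P.card then B (e ⟨d, h'⟩) y else 0, fun x y => ?_⟩
  have hmap : ∀ f : Fin D → ℝ, (∀ d : Fin D, ¬ (d : ℕ) < P.card → f d = 0) →
      ∑ d : Fin D, f d = ∑ i : Fin P.card, f (Fin.castLEEmb h i) := by
    intro f hf
    rw [← Finset.sum_map (univ : Finset (Fin P.card)) (Fin.castLEEmb h) f]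
    refine (Finset.sum_subset (Finset.subset_univ _) ?_).symm
    intro d _ hd
    refine hf d fun hlt => hd ?_
    simp only [Finset.mem_map, Finset.mem_univ, true_and]
    exact ⟨⟨(d : ℕ), hlt⟩, by ext; rfl⟩
  rw [hmap _ (by intro d hd; simp [dif_neg hd])]
  rw [← Finset.sum_attach P (fun p => A p x * B p y)]
  refine Fintype.sum_equiv P.equivFin _ _ fun p => ?_
  have hlt : ((Fin.castLEEmb h (P.equivFin p) : Fin D) : ℕ) < P.card := (P.equivFin p).isLt
  simp only [dif_pos hlt]
  have h2 : (⟨((Fin.castLEEmb h (P.equivFin p) : Fin D) : ℕ), hlt⟩ : Fin P.card)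
      = P.equivFin p := rfl
  rw [h2]
  show A (p : I) x * B (p : I) y
      = A ((P.equivFin.symm (P.equivFin p) : ↥P) : I) x * B ((P.equivFin.symm (P.equivFin p) : ↥P) : I) y
  rw [Equiv.symm_apply_apply]

/-- Cardinality of the multi-indices on `Fin (S+1)` of total degree exactly `K`. -/
lemma card_piAntidiag_univ (S K : ℕ) :
    (Finset.piAntidiag (univ : Finset (Fin (S + 1))) K).card = (K + S).choose S := by
  classical
  rw [← Finset.map_sym_eq_piAntidiag (univ : Finset (Fin (S + 1))) K, Finset.card_map,
    Finset.sym_univ, Finset.card_univ, Sym.card_sym_fin_eq_multichoose,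
    Nat.multichoose_eq]
  have h1 : S + 1 + K - 1 = K + S := by omega
  rw [h1, ← Nat.choose_symm (show K ≤ K + S by omega)]
  congr 1
  omega

/-- The set of multi-indices on `Fin S` of total degree at most `K` has
cardinality at most `(K + S).choose S`. -/
lemma card_degree_le_multiindices (S K : ℕ) :
    ((Finset.range (K + 1)).biUnion
      (fun k => Finset.piAntidiag (univ : Finset (Fin S)) k)).card ≤ (K + S).choose S := by
  classical
  set U := (Finset.range (K + 1)).biUnion
      (fun k => Finset.piAntidiag (univ : Finset (Fin S)) k) with hU
  have hsum : ∀ α ∈ U, ∑ s, α s ≤ K := by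
    intro α hα
    rcases Finset.mem_biUnion.1 hα with ⟨k, hk, hαk⟩
    have h1 : ∑ s, α s = k := (Finset.mem_piAntidiag.1 hαk).1
    have h2 : k < K + 1 := Finset.mem_range.1 hk
    omega
  rw [← card_piAntidiag_univ S K]
  refine Finset.card_le_card_of_injOn (fun α => Fin.snoc α (K - ∑ s, α s)) ?_ ?_
  · intro α hα
    rw [Finset.mem_coe, Finset.mem_piAntidiag]
    constructor
    · rw [Fin.sum_univ_castSucc]
      simp only [Fin.snoc_castSucc, Fin.snoc_last]
      have := hsum α hα
      omega
    · intro i _; exact Finset.mem_univ i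
  · intro α hα β hβ hfe
    funext i
    have := congrFun hfe (Fin.castSucc i)
    simpa [Fin.snoc_castSucc] using this

/-- Theorem 4, second route: if one sufficient statistic is a nonzero constant
(`T j ≡ c₀ ≠ 0`, e.g. the location-scale family), the shift `-a` can be
absorbed (Lemma 1), and the Monte Carlo sum of the degree-`K` Taylor
approximation of `g` admits, for every `M`, a factorization of size
`D = C(K + S, S) - 1` independent of `M`, up to a constant remainder. -/
theorem mc_repar_taylor_absorbed_shift {Θ Ξ : Type*} (S K : ℕ) (hS : 2 ≤ S)
    (η : Fin S → Θ → ℝ) (T : Fin S → Ξ → ℝ) (a : ℝ) (c : Fin (K + 1) → ℝ)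
    (j : Fin S) (c₀ : ℝ) (hc₀ : c₀ ≠ 0) (hTj : ∀ ξ : Ξ, T j ξ = c₀) :
    ∀ M : ℕ, ∃ (n : Θ → Fin ((K + S).choose S - 1) → ℝ)
      (t : (Fin M → Ξ) → Fin ((K + S).choose S - 1) → ℝ) (r : ℝ),
      ∀ (θ : Θ) (ξ : Fin M → Ξ),
        ∑ i : Fin M, ∑ k : Fin (K + 1),
            c k * (∑ s : Fin S, η s θ * T s (ξ i) - a) ^ (k : ℕ) =
          (∑ j', n θ j' * t ξ j') + r := by
  intro M
  classical
  -- absorbed parameters (Lemma 1)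
  set u : Fin S → Θ → ℝ := fun s θ => η s θ - if s = j then a / c₀ else 0 with hu
  have habs : ∀ (θ : Θ) (x : Ξ),
      ∑ s : Fin S, η s θ * T s x - a = ∑ s : Fin S, u s θ * T s x := by
    intro θ x
    have h1 : ∑ s : Fin S, u s θ * T s x
        = ∑ s : Fin S, (η s θ * T s x - (if s = j then a / c₀ * T s x else 0)) := by
      refine Finset.sum_congr rfl fun s _ => ?_
      by_cases hs : s = j <;> simp [u, hs, sub_mul]
    rw [h1, Finset.sum_sub_distrib, Finset.sum_ite_eq' univ j (fun s => a / c₀ * T s x)]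
    simp only [Finset.mem_univ, if_true]
    rw [hTj x, div_mul_cancel₀ a hc₀]
  -- coefficients as a function on ℕ
  set c' : ℕ → ℝ := fun k => if h : k < K + 1 then c ⟨k, h⟩ else 0 with hcdef
  -- the index set of multi-indices of degree ≤ K
  set U : Finset (Fin S → ℕ) := (Finset.range (K + 1)).biUnion
      (fun k => Finset.piAntidiag (univ : Finset (Fin S)) k) with hUdef
  have hdisj : (↑(Finset.range (K + 1)) : Set ℕ).PairwiseDisjoint
      (fun k => Finset.piAntidiag (univ : Finset (Fin S)) k) := by
    intro k _ l _ hkl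
    simp only [Function.onFun]
    rw [Finset.disjoint_left]
    intro α hαk hαl
    exact hkl ((Finset.mem_piAntidiag.1 hαk).1 ▸ (Finset.mem_piAntidiag.1 hαl).1.symm ▸ rfl)
  have h0U : (0 : Fin S → ℕ) ∈ U := by
    refine Finset.mem_biUnion.2 ⟨0, by simp, ?_⟩
    simp
  -- key pointwise expansion
  have step1 : ∀ (θ : Θ) (x : Ξ),
      ∑ k : Fin (K + 1), c k * (∑ s : Fin S, η s θ * T s x - a) ^ (k : ℕ)
      = ∑ α ∈ U, c' (∑ s, α s) * (Nat.multinomial univ α : ℝ)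
          * (∏ s, (u s θ) ^ (α s)) * (∏ s, (T s x) ^ (α s)) := by
    intro θ x
    rw [habs θ x]
    calc ∑ k : Fin (K + 1), c k * (∑ s : Fin S, u s θ * T s x) ^ (k : ℕ)
        = ∑ k ∈ Finset.range (K + 1), c' k * (∑ s : Fin S, u s θ * T s x) ^ k := by
          rw [← Fin.sum_univ_eq_sum_range
            (fun m => c' m * (∑ s : Fin S, u s θ * T s x) ^ m) (K + 1)]
          exact Finset.sum_congr rfl fun k _ => by simp only [c', dif_pos k.isLt, Fin.eta]
      _ = ∑ k ∈ Finset.range (K + 1), ∑ α ∈ Finset.piAntidiag (univ : Finset (Fin S)) k,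
            c' (∑ s, α s) * (Nat.multinomial univ α : ℝ)
              * (∏ s, (u s θ) ^ (α s)) * (∏ s, (T s x) ^ (α s)) := by
          refine Finset.sum_congr rfl fun k hk => ?_
          rw [Finset.sum_pow_eq_sum_piAntidiag (univ : Finset (Fin S))
            (fun s => u s θ * T s x) k, Finset.mul_sum]
          refine Finset.sum_congr rfl fun α hα => ?_
          have hαs : ∑ s, α s = k := (Finset.mem_piAntidiag.1 hα).1
          rw [hαs]
          simp_rw [mul_pow]
          rw [Finset.prod_mul_distrib]
          ring
      _ = ∑ α ∈ U, c' (∑ s, α s) * (Nat.multinomial univ α : ℝ)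
            * (∏ s, (u s θ) ^ (α s)) * (∏ s, (T s x) ^ (α s)) :=
          (Finset.sum_biUnion hdisj).symm
  -- cardinality bound
  have hcard : (U.erase 0).card ≤ (K + S).choose S - 1 := by
    rw [Finset.card_erase_of_mem h0U]
    exact Nat.sub_le_sub_right (card_degree_le_multiindices S K) 1
  obtain ⟨n, t, hnt⟩ := pad_factorization (U.erase 0)
    (fun α θ => c' (∑ s, α s) * (Nat.multinomial univ α : ℝ) * ∏ s, (u s θ) ^ (α s))
    (fun α (ξ : Fin M → Ξ) => ∑ i : Fin M, ∏ s, (T s (ξ i)) ^ (α s)) hcard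
  refine ⟨n, t, c' 0 * (Nat.multinomial (univ : Finset (Fin S)) (0 : Fin S → ℕ) : ℝ) * M,
    fun θ ξ => ?_⟩
  have hnt' := hnt θ ξ
  calc ∑ i : Fin M, ∑ k : Fin (K + 1),
        c k * (∑ s : Fin S, η s θ * T s (ξ i) - a) ^ (k : ℕ)
      = ∑ i : Fin M, ∑ α ∈ U, c' (∑ s, α s) * (Nat.multinomial univ α : ℝ)
          * (∏ s, (u s θ) ^ (α s)) * (∏ s, (T s (ξ i)) ^ (α s)) :=
        Finset.sum_congr rfl fun i _ => step1 θ (ξ i)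
    _ = ∑ α ∈ U, ∑ i : Fin M, c' (∑ s, α s) * (Nat.multinomial univ α : ℝ)
          * (∏ s, (u s θ) ^ (α s)) * (∏ s, (T s (ξ i)) ^ (α s)) := Finset.sum_comm
    _ = ∑ α ∈ U, (c' (∑ s, α s) * (Nat.multinomial univ α : ℝ) * ∏ s, (u s θ) ^ (α s))
          * (∑ i : Fin M, ∏ s, (T s (ξ i)) ^ (α s)) :=
        Finset.sum_congr rfl fun α _ => (Finset.mul_sum _ _ _).symm
    _ = (c' (∑ s, (0 : Fin S → ℕ) s) * (Nat.multinomial univ (0 : Fin S → ℕ) : ℝ)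
          * ∏ s, (u s θ) ^ ((0 : Fin S → ℕ) s))
          * (∑ i : Fin M, ∏ s, (T s (ξ i)) ^ ((0 : Fin S → ℕ) s))
        + ∑ α ∈ U.erase 0,
            (c' (∑ s, α s) * (Nat.multinomial univ α : ℝ) * ∏ s, (u s θ) ^ (α s))
            * (∑ i : Fin M, ∏ s, (T s (ξ i)) ^ (α s)) :=
        (Finset.add_sum_erase U _ h0U).symm
    _ = (∑ j', n θ j' * t ξ j')
        + c' 0 * (Nat.multinomial (univ : Finset (Fin S)) (0 : Fin S → ℕ) : ℝ) * M := by
        rw [hnt', add_comm]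
        congr 1
        simp [mul_assoc]
end
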